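/- Let p ∈ ℝ², l ∈ {0,…,5}, and let q, r ∈ W_l(p). If ⟨r − p, b_l⟩ < ⟨q − p, b_l⟩, then ‖q − r‖ < ‖p − q‖. -/

import Mathlib

/- Common geometric setup: the Euclidean plane, wedges `W_l`, bisectors `b_l`,
equilateral triangles `∆_l` and `l`-tri's, circular sectors `σ_l` and `l`-pies,
and the proximity graphs (Semi-Yao, nearest-neighbor, Equilateral/Pie Delaunay,
Yao) together with Euclidean minimum spanning trees. -/

open Real EuclideanGeometry
open scoped RealInnerProductSpace

noncomputable section

abbrev E : Type := EuclideanSpace ℝ (Fin 2)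

/-- The point `(a, b)` in the Euclidean plane. -/
def pt (a b : ℝ) : E := (WithLp.equiv 2 (Fin 2 → ℝ)).symm ![a, b]

/-- The unit vector at polar angle `θ`. -/
def dir (θ : ℝ) : E := pt (Real.cos θ) (Real.sin θ)

/-- The lower boundary angle `(2l-1)π/6` of the `l`-th wedge. -/
def lo (l : Fin 6) : ℝ := (2 * ((l : ℕ) : ℝ) - 1) * π / 6

/-- The upper boundary angle `(2l+1)π/6` of the `l`-th wedge. -/
def hi (l : Fin 6) : ℝ := (2 * ((l : ℕ) : ℝ) + 1) * π / 6

/-- The half-open wedge `W_l`: all nonzero points whose polar angle (mod `2π`)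
lies in `[(2l-1)π/6, (2l+1)π/6)`. -/
def wedge (l : Fin 6) : Set E :=
  {x | x ≠ 0 ∧ ∃ θ : ℝ, lo l ≤ θ ∧ θ < hi l ∧ x = ‖x‖ • dir θ}

/-- `W_l(p)`, the translate of `W_l` with apex `p`. -/
def wedgeAt (l : Fin 6) (p : E) : Set E := {x | x - p ∈ wedge l}

/-- The unit bisector vector `b_l = (cos(lπ/3), sin(lπ/3))` of `W_l`. -/
def bvec (l : Fin 6) : E := dir (((l : ℕ) : ℝ) * π / 3)

/-- `V_l(p) = P ∩ W_l(p)`. -/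
def Vl (P : Finset E) (l : Fin 6) (p : E) : Set E := {x | x ∈ P ∧ x ∈ wedgeAt l p}

/-- The closed equilateral triangle `∆_l` with vertices `0`, `dir ((2l-1)π/6)`,
`dir ((2l+1)π/6)`. -/
def tri (l : Fin 6) : Set E := convexHull ℝ {0, dir (lo l), dir (hi l)}

/-- The vertex set of `∆_l`. -/
def triVerts (l : Fin 6) : Set E := {0, dir (lo l), dir (hi l)}

/-- The `l`-tri `c + lam • ∆_l`. -/
def lTri (l : Fin 6) (c : E) (lam : ℝ) : Set E := (fun x => c + lam • x) '' tri l

/-- The closed circular sector (piece of pie) `σ_l` of the unit disk. -/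
def sector (l : Fin 6) : Set E :=
  {x | ‖x‖ ≤ 1 ∧ (x = 0 ∨ ∃ θ : ℝ, lo l ≤ θ ∧ θ ≤ hi l ∧ x = ‖x‖ • dir θ)}

/-- The `l`-pie `c + lam • σ_l`. -/
def lPie (l : Fin 6) (c : E) (lam : ℝ) : Set E := (fun x => c + lam • x) '' sector l

/-- Directed Semi-Yao graph edge from `a` to `b`: `a ∈ V_l(b)` for some `l` and `a`
has the minimum `b_l`-coordinate among the points of `V_l(b)`. -/
def SYG (P : Finset E) (a b : E) : Prop :=
  b ∈ P ∧ ∃ l : Fin 6, a ∈ Vl P l b ∧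
    ∀ r ∈ Vl P l b, ⟪a - b, bvec l⟫ ≤ ⟪r - b, bvec l⟫

/-- Undirected Semi-Yao graph edge. -/
def SYGu (P : Finset E) (p q : E) : Prop := SYG P p q ∨ SYG P q p

/-- Directed nearest-neighbor graph edge from `a` to `b`: `b ∈ P \ {a}` and
`‖a - b‖ = min_{r ∈ P \ {a}} ‖a - r‖`. -/
def NNG (P : Finset E) (a b : E) : Prop :=
  a ∈ P ∧ b ∈ P ∧ b ≠ a ∧ ∀ r ∈ P, r ≠ a → ‖a - b‖ ≤ ‖a - r‖

/-- Edge of the Equilateral Delaunay triangulation `EDT_l(P)`: there is an `l`-tri,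
empty with respect to `P`, with both endpoints on its boundary. -/
def EDT (P : Finset E) (l : Fin 6) (p q : E) : Prop :=
  p ∈ P ∧ q ∈ P ∧ p ≠ q ∧ ∃ c : E, ∃ lam : ℝ, 0 < lam ∧
    p ∈ frontier (lTri l c lam) ∧ q ∈ frontier (lTri l c lam) ∧
    ∀ r ∈ P, r ∉ interior (lTri l c lam)

/-- Edge of the Equilateral Delaunay graph `EDG(P) = EDT_0(P) ∪ EDT_1(P)`. -/
def EDG (P : Finset E) (p q : E) : Prop := EDT P 0 p q ∨ EDT P 1 p q

/-- Directed Yao-graph edge from `p` to `q`: `q ∈ V_l(p)` for some `l` and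
`‖p - q‖ = min_{r ∈ V_l(p)} ‖p - r‖`. -/
def YG (P : Finset E) (p q : E) : Prop :=
  p ∈ P ∧ ∃ l : Fin 6, q ∈ Vl P l p ∧ ∀ r ∈ Vl P l p, ‖p - q‖ ≤ ‖p - r‖

/-- Edge of the Pie Delaunay triangulation `PDT_l(P)`: there is an `l`-pie, empty
with respect to `P`, with both endpoints on its boundary. -/
def PDT (P : Finset E) (l : Fin 6) (p q : E) : Prop :=
  p ∈ P ∧ q ∈ P ∧ p ≠ q ∧ ∃ c : E, ∃ lam : ℝ, 0 < lam ∧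
    p ∈ frontier (lPie l c lam) ∧ q ∈ frontier (lPie l c lam) ∧
    ∀ r ∈ P, r ∉ interior (lPie l c lam)

/-- Edge of the Pie Delaunay graph `PDG(P) = PDT_0(P) ∪ ⋯ ∪ PDT_5(P)`. -/
def PDG (P : Finset E) (p q : E) : Prop := ∃ l : Fin 6, PDT P l p q

/-- Total Euclidean edge weight of a graph on the points of `P`. -/
def edgeWeight (P : Finset E) (G : SimpleGraph {x // x ∈ P}) : ℝ :=
  ∑ e ∈ G.edgeSet.toFinite.toFinset,
    Sym2.lift ⟨fun (a b : {x // x ∈ P}) => ‖(a : E) - (b : E)‖,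
      fun _ _ => norm_sub_rev _ _⟩ e

/-- `T` is a Euclidean minimum spanning tree of `P`: a spanning tree (connected and
acyclic graph on the vertex set `P`) of minimum total Euclidean edge weight. -/
def IsEMST (P : Finset E) (T : SimpleGraph {x // x ∈ P}) : Prop :=
  T.IsTree ∧ ∀ G : SimpleGraph {x // x ∈ P}, G.IsTree → edgeWeight P T ≤ edgeWeight P G


lemma inner_dir_dir (θ φ : ℝ) : ⟪dir θ, dir φ⟫ = Real.cos (θ - φ) := by
  simp [dir, pt, PiLp.inner_apply, Fin.sum_univ_two, Real.cos_sub, WithLp.equiv_symm_apply, PiLp.toLp_apply,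
    RCLike.inner_apply, mul_comm]

lemma norm_dir (θ : ℝ) : ‖dir θ‖ = 1 := by
  have h : ‖dir θ‖ ^ 2 = 1 := by
    rw [← real_inner_self_eq_norm_sq, inner_dir_dir, sub_self, Real.cos_zero]
  have h0 := norm_nonneg (dir θ)
  nlinarith

lemma cos_identity (x y : ℝ) :
    Real.cos x = 2 * Real.cos (x - y) * Real.cos y - Real.cos (x - 2 * y) := by
  have h1 : x - 2 * y = (x - y) - y := by ring
  rw [h1, Real.cos_sub (x - y) y, Real.cos_sub x y, Real.sin_sub x y]
  linear_combination (-Real.cos x) * Real.sin_sq_add_cos_sq y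

/-- if `q, r ∈ W_l(p)` and `⟨r - p, b_l⟩ < ⟨q - p, b_l⟩`,
then `‖q - r‖ < ‖p - q‖`. -/
theorem smaller_bisector_coordinate_closer (p q r : E) (l : Fin 6)
    (hq : q ∈ wedgeAt l p) (hr : r ∈ wedgeAt l p)
    (h : ⟪r - p, bvec l⟫ < ⟪q - p, bvec l⟫) : ‖q - r‖ < ‖p - q‖ := by
  simp only [wedgeAt, wedge, Set.mem_setOf_eq] at hq hr
  obtain ⟨hq0, θ, hθ1, hθ2, hθe⟩ := hq
  obtain ⟨hr0, φ, hφ1, hφ2, hφe⟩ := hr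
  set a := ‖q - p‖ with ha
  set b := ‖r - p‖ with hb
  have hapos : 0 < a := norm_pos_iff.mpr hq0
  have hbpos : 0 < b := norm_pos_iff.mpr hr0
  set β := ((l : ℕ) : ℝ) * π / 3 with hβ
  have hbv : bvec l = dir β := rfl
  have hpi := Real.pi_pos
  have hlo : lo l = β - π / 6 := by rw [lo, hβ]; ring
  have hhi : hi l = β + π / 6 := by rw [hi, hβ]; ring
  rw [hlo] at hθ1 hφ1
  rw [hhi] at hθ2 hφ2
  have hq' : ⟪q - p, bvec l⟫ = a * Real.cos (θ - β) := by
    rw [hθe, hbv, real_inner_smul_left, inner_dir_dir]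
  have hr' : ⟪r - p, bvec l⟫ = b * Real.cos (φ - β) := by
    rw [hφe, hbv, real_inner_smul_left, inner_dir_dir]
  rw [hq', hr'] at h
  have hc2 : 0 < Real.cos (φ - β) :=
    Real.cos_pos_of_mem_Ioo ⟨by linarith, by linarith⟩
  have hc4 : 0 < Real.cos ((θ - β) - 2 * (φ - β)) :=
    Real.cos_pos_of_mem_Ioo ⟨by linarith, by linarith⟩
  have hid := cos_identity (θ - β) (φ - β)
  rw [show (θ - β) - (φ - β) = θ - φ from by ring] at hid
  have hkey : b < 2 * a * Real.cos (θ - φ) := by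
    have hm : b * Real.cos (φ - β) < (2 * a * Real.cos (θ - φ)) * Real.cos (φ - β) := by
      nlinarith [mul_pos hapos hc4]
    exact lt_of_mul_lt_mul_right hm hc2.le
  have hqr : q - r = a • dir θ - b • dir φ := by rw [← hθe, ← hφe]; abel
  have hsq : ‖q - r‖ ^ 2 = a ^ 2 + b ^ 2 - 2 * a * b * Real.cos (θ - φ) := by
    rw [hqr, norm_sub_sq_real, real_inner_smul_left, real_inner_smul_right, inner_dir_dir,
      norm_smul, norm_smul, norm_dir, norm_dir]
    rw [Real.norm_eq_abs, Real.norm_eq_abs, abs_of_pos hapos, abs_of_pos hbpos]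
    ring
  have hlt : ‖q - r‖ ^ 2 < a ^ 2 := by nlinarith
  have hpq : ‖p - q‖ = a := by rw [ha]; exact norm_sub_rev p q
  rw [hpq]
  exact lt_of_pow_lt_pow_left₀ 2 hapos.le hlt
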